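/- Let R be a p-torsion free perfectoid ring with compatible p-power roots ϖ_n of (a generator of) (p) as above. Then for each n ≥ 1, the ideal (ϖ_n) ⊆ R is the preimage of the kernel of the p^n-power Frobenius of R/p, and the map R/ϖ_n → R/p induced by x ↦ x^{p^n} is an isomorphism. -/

import Mathlib

/-- The defining conditions on `ϖ` for a `p`-torsion free perfectoid ring:
`(ϖ^p) = (p)` and the map `R/ϖ → R/p`, `x ↦ x^p`, is bijective
(stated elementwise: surjectivity of `x ↦ x^p mod p` and the kernel condition). -/
def PerfectoidCond (p : ℕ) (R : Type*) [CommRing R] (ϖ : R) : Prop :=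
  Ideal.span {ϖ ^ p} = Ideal.span {(p : R)} ∧
  (∀ y : R, ∃ x : R, y - x ^ p ∈ Ideal.span {(p : R)}) ∧
  (∀ x : R, x ^ p ∈ Ideal.span {(p : R)} → x ∈ Ideal.span {ϖ})

/-- (ϖ_n) is the preimage of the kernel of the p^n-power Frobenius of R/p,
and x ↦ x^{p^n} induces an isomorphism R/ϖ_n ≅ R/p (here ϖs n = ϖ_{n+1}). -/
theorem stmt_6 {p : ℕ} (hp : p.Prime) (R : Type*) [CommRing R]
    (hnzd : (p : R) ∈ nonZeroDivisors R)
    (hc : IsAdicComplete (Ideal.span {(p : R)}) R)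
    (ϖ : R) (hϖ : PerfectoidCond p R ϖ)
    (ϖs : ℕ → R) (hseq : ∀ n, ϖs (n + 1) ^ p = ϖs n)
    (h0 : Ideal.span {ϖs 0} = Ideal.span {ϖ}) :
    ∀ n : ℕ,
      (∀ x : R, x ∈ Ideal.span {ϖs n} ↔ x ^ p ^ (n + 1) ∈ Ideal.span {(p : R)}) ∧
      (∀ y : R, ∃ x : R, y - x ^ p ^ (n + 1) ∈ Ideal.span {(p : R)}) := by
  obtain ⟨hspan, hsurj, hker⟩ := hϖ
  simp only [Ideal.mem_span_singleton] at *
  -- basic divisibilities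
  have hϖp_dvd_p : ϖ ^ p ∣ (p : R) := by
    rw [← Ideal.mem_span_singleton, hspan, Ideal.mem_span_singleton]
  have h0dvd : ϖs 0 ∣ ϖ := by
    rw [← Ideal.mem_span_singleton, h0, Ideal.mem_span_singleton]
  have h0dvd' : ϖ ∣ ϖs 0 := by
    rw [← Ideal.mem_span_singleton, ← h0, Ideal.mem_span_singleton]
  have hmono : ∀ n, ϖs (n + 1) ∣ ϖs n := fun n =>
    (hseq n) ▸ dvd_pow_self _ hp.pos.ne'
  have hchain : ∀ n, ϖs n ∣ ϖ := by
    intro n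
    induction n with
    | zero => exact h0dvd
    | succ k ih => exact dvd_trans (hmono k) ih
  intro n
  induction n with
  | zero =>
    refine ⟨fun x => ⟨fun hx => ?_, fun hx => ?_⟩, fun y => ?_⟩
    · obtain ⟨t, ht⟩ := dvd_trans h0dvd' hx
      have hp_dvd : (p : R) ∣ ϖ ^ p := by
        rw [← Ideal.mem_span_singleton, ← hspan, Ideal.mem_span_singleton]
      rw [pow_one, ht, mul_pow]
      exact Dvd.dvd.mul_right hp_dvd _
    · rw [pow_one] at hx
      exact dvd_trans h0dvd (hker x hx)
    · obtain ⟨x, hx⟩ := hsurj y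
      exact ⟨x, by rwa [pow_one]⟩
  | succ k ih =>
    obtain ⟨ihmem, ihsurj⟩ := ih
    constructor
    · intro x
      constructor
      · rintro ⟨t, rfl⟩
        have h1 : ϖs k ∣ (ϖs (k + 1) * t) ^ p := by
          rw [mul_pow, ← hseq k]; exact Dvd.intro _ rfl
        have h2 := (ihmem _).1 h1
        rwa [← pow_mul, ← pow_succ'] at h2
      · intro hx
        -- x ^ p ∈ (ϖs k)
        have h1 : ϖs k ∣ x ^ p := by
          apply (ihmem (x ^ p)).2
          rwa [← pow_mul, ← pow_succ']
        obtain ⟨t, ht⟩ := h1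
        -- write t = s^p + p*u
        obtain ⟨s, u, hu⟩ : ∃ s u, t = s ^ p + (p : R) * u := by
          obtain ⟨s, hs⟩ := hsurj t
          obtain ⟨u, hu'⟩ := hs
          exact ⟨s, u, by linear_combination hu'⟩
        -- x^p - (ϖs (k+1) * s)^p is divisible by p
        have hdvd : (p : R) ∣ x ^ p - (ϖs (k + 1) * s) ^ p := by
          refine ⟨ϖs k * u, ?_⟩
          rw [ht, hu, mul_pow, hseq k]
          ring
        -- hence d := x - ϖs (k+1) * s satisfies p ∣ d^p
        set b := ϖs (k + 1) * s with hb
        obtain ⟨r, hr⟩ := exists_add_pow_prime_eq hp (x - b) b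
        have hdp : (p : R) ∣ (x - b) ^ p := by
          have heq : (x - b) ^ p = x ^ p - b ^ p - (p : R) * ((x - b) * b * r) := by
            linear_combination -hr
          rw [heq]
          exact dvd_sub hdvd (Dvd.intro _ rfl)
        have hdϖ : ϖ ∣ x - b := hker _ hdp
        obtain ⟨c, hc'⟩ := dvd_trans (hchain (k + 1)) hdϖ
        exact ⟨s + c, by linear_combination hc'⟩
    · intro y
      obtain ⟨x, hx⟩ := ihsurj y
      obtain ⟨x', hx'⟩ := hsurj x
      obtain ⟨a, ha⟩ := hx
      obtain ⟨c, hc⟩ := hx'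
      have h2 : (p : R) ∣ x' ^ p - x := ⟨-c, by linear_combination -hc⟩
      have h3 : (p : R) ∣ (x' ^ p) ^ p ^ (k + 1) - x ^ p ^ (k + 1) :=
        dvd_trans h2 (sub_dvd_pow_sub_pow _ _ _)
      obtain ⟨e, he⟩ := h3
      refine ⟨x', ⟨a - e, ?_⟩⟩
      have hpow : x' ^ p ^ (k + 1 + 1) = (x' ^ p) ^ p ^ (k + 1) := by
        rw [← pow_mul, ← pow_succ']
      rw [hpow]
      linear_combination ha - he
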